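/- Let G0 be the ADMG with vertex set {A1, A2, W, Y}, directed edges W→A1, A1→Y, A2→Y, and bidirected edges W↔A2 and W↔Y. Then the set {W, Y} is not reachable in G0, and its reachable closure is ⟨{W, Y}⟩ = {W, Y, A2}. Consequently, for Y' = {Y} and A' = {A2}, the set Y'* equals {Y, A1, W}, and the district {W, Y} of the induced subgraph (G0)_{Y'*} is not an intrinsic set of G0. -/

import Mathlib

/-- A conditional acyclic directed mixed graph (CADMG) on vertex type `V`:
a directed edge relation `dir` with no directed cycles, a symmetric irreflexive
bidirected edge relation `bi`, and a set `rnd` of random vertices (the remaining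
vertices being fixed), such that no directed edge points into a fixed vertex and
no bidirected edge is incident to a fixed vertex.  An ADMG is the special case
`rnd = Set.univ`. -/
structure CADMG (V : Type*) where
  dir : V → V → Prop
  bi : V → V → Prop
  rnd : Set V
  acyclic : ∀ v, ¬ Relation.TransGen dir v v
  bi_symm : ∀ a b, bi a b → bi b a
  bi_irrefl : ∀ a, ¬ bi a a
  dir_rnd : ∀ a b, dir a b → b ∈ rnd
  bi_rnd : ∀ a b, bi a b → a ∈ rnd ∧ b ∈ rnd

namespace CADMG

variable {V : Type*}

/-- A random vertex `r` is fixable if there is no other vertex `w` with both a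
directed path from `r` to `w` and a bidirected path from `r` to `w`. -/
def Fixable (G : CADMG V) (r : V) : Prop :=
  r ∈ G.rnd ∧
    ¬ ∃ w, w ≠ r ∧ Relation.ReflTransGen G.dir r w ∧ Relation.ReflTransGen G.bi r w

/-- The fixing operator: move `r` from the random to the fixed vertices and delete
all directed edges into `r` and all bidirected edges incident to `r`. -/
def fix (G : CADMG V) (r : V) : CADMG V where
  dir a b := G.dir a b ∧ b ≠ r
  bi a b := G.bi a b ∧ a ≠ r ∧ b ≠ r
  rnd := G.rnd \ {r}
  acyclic v h := G.acyclic v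
    (Relation.TransGen.mono (fun (a b : V) (hab : G.dir a b ∧ b ≠ r) => hab.1) v v h)
  bi_symm a b h := ⟨G.bi_symm a b h.1, h.2.2, h.2.1⟩
  bi_irrefl a h := G.bi_irrefl a h.1
  dir_rnd a b h := ⟨G.dir_rnd a b h.1, h.2⟩
  bi_rnd a b h := ⟨⟨(G.bi_rnd a b h.1).1, h.2.1⟩, (G.bi_rnd a b h.1).2, h.2.2⟩

/-- A sequence of vertices is a valid fixing sequence if it is empty, or its head is
fixable and its tail is valid in the graph obtained by fixing the head. -/
def Valid (G : CADMG V) : List V → Prop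
  | [] => True
  | r :: rest => G.Fixable r ∧ (G.fix r).Valid rest

/-- `φ_σ(G)`: the CADMG obtained by applying the fixing operators along the list `σ`. -/
def fixList (G : CADMG V) : List V → CADMG V
  | [] => G
  | r :: rest => (G.fix r).fixList rest

/-- A set `R` of random vertices is reachable if some ordering of the remaining random
vertices is a valid fixing sequence. -/
def Reachable (G : CADMG V) (R : Set V) : Prop :=
  ∃ σ : List V, G.Valid σ ∧ ∀ v, v ∈ σ ↔ v ∈ G.rnd \ R

/-- `C` is the reachable closure of `S`: the smallest reachable superset of `S`. -/
def IsReachableClosure (G : CADMG V) (S C : Set V) : Prop :=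
  G.Reachable C ∧ S ⊆ C ∧ ∀ T, G.Reachable T → S ⊆ T → C ⊆ T

/-- `D` is bidirected-connected (within `D` itself): `D` is nonempty and any two of its
elements are joined by a bidirected path staying inside `D`. -/
def BiConnected (G : CADMG V) (D : Set V) : Prop :=
  D.Nonempty ∧ ∀ a ∈ D, ∀ b ∈ D,
    Relation.ReflTransGen (fun x y => G.bi x y ∧ x ∈ D ∧ y ∈ D) a b

/-- An intrinsic set: reachable and bidirected-connected. -/
def Intrinsic (G : CADMG V) (R : Set V) : Prop :=
  G.Reachable R ∧ G.BiConnected R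

/-- The induced subgraph on a set `W` of vertices (vertices outside `W` become fixed
and lose all their edges). -/
def induce (G : CADMG V) (W : Set V) : CADMG V where
  dir a b := G.dir a b ∧ a ∈ W ∧ b ∈ W
  bi a b := G.bi a b ∧ a ∈ W ∧ b ∈ W
  rnd := G.rnd ∩ W
  acyclic v h := G.acyclic v
    (Relation.TransGen.mono (fun (a b : V) (hab : G.dir a b ∧ a ∈ W ∧ b ∈ W) => hab.1) v v h)
  bi_symm a b h := ⟨G.bi_symm a b h.1, h.2.2, h.2.1⟩
  bi_irrefl a h := G.bi_irrefl a h.1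
  dir_rnd a b h := ⟨G.dir_rnd a b h.1, h.2.2⟩
  bi_rnd a b h := ⟨⟨(G.bi_rnd a b h.1).1, h.2.1⟩, (G.bi_rnd a b h.1).2, h.2.2⟩

/-- The districts of a CADMG: the connected components of its random vertices under
the bidirected edge relation. -/
def District (G : CADMG V) (D : Set V) : Prop :=
  ∃ v ∈ G.rnd, D = {w | Relation.ReflTransGen G.bi v w}

/-- `Y*`: the set of vertices having a directed path (possibly of length zero) to an
element of `Y` that does not intersect `A`. -/
def Ystar (G : CADMG V) (A Y : Set V) : Set V :=
  {v | ∃ y ∈ Y, Relation.ReflTransGen (fun a b => G.dir a b ∧ a ∉ A ∧ b ∉ A) v y}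

/-- `F` is an `R`-rooted C-forest: `R ⊆ F`, `F` is bidirected-connected in the induced
subgraph `G_F`, and there is a subgraph of `G_F` with vertex set `F` and a subset `E` of
its directed edges in which every element of `F` has a directed path (possibly of
length zero) to an element of `R`. -/
def CForest (G : CADMG V) (R F : Set V) : Prop :=
  R ⊆ F ∧ G.BiConnected F ∧
    ∃ E : V → V → Prop,
      (∀ a b, E a b → G.dir a b ∧ a ∈ F ∧ b ∈ F) ∧
      ∀ f ∈ F, ∃ r ∈ R, Relation.ReflTransGen E f r

/-- A hedge for `(Y, A)` in `G`: a pair `(F, F')` of `R`-rooted C-forests, for some common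
root set `R`, with `F ⊊ F'`, `F ∩ A = ∅`, `A ∩ (F' \ F) ≠ ∅`, and every element of `R`
has a directed path to an element of `Y` that does not intersect `A`. -/
def Hedge (G : CADMG V) (Y A : Set V) : Prop :=
  ∃ R F F', G.CForest R F ∧ G.CForest R F' ∧ F ⊂ F' ∧ F ∩ A = ∅ ∧
    (A ∩ (F' \ F)).Nonempty ∧
    ∀ r ∈ R, ∃ y ∈ Y, Relation.ReflTransGen (fun a b => G.dir a b ∧ a ∉ A ∧ b ∉ A) r y

end CADMG

/-- The vertex set of the counterexample graph `G0`. -/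
inductive Vtx : Type
  | A1 | A2 | W | Y

/-- Directed edges of `G0`: `W → A1`, `A1 → Y`, `A2 → Y`. -/
def dir0 (a b : Vtx) : Prop :=
  (a = .W ∧ b = .A1) ∨ (a = .A1 ∧ b = .Y) ∨ (a = .A2 ∧ b = .Y)

/-- Bidirected edges of `G0`: `W ↔ A2` and `W ↔ Y`. -/
def bi0 (a b : Vtx) : Prop :=
  (a = .W ∧ b = .A2) ∨ (a = .A2 ∧ b = .W) ∨ (a = .W ∧ b = .Y) ∨ (a = .Y ∧ b = .W)


deriving instance DecidableEq for Vtx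

namespace CADMG

variable {V : Type*}

lemma fixList_dir (G : CADMG V) : ∀ (τ : List V) (a b : V),
    G.dir a b → b ∉ τ → (G.fixList τ).dir a b
  | [], _, _, h, _ => h
  | r :: rest, a, b, h, hb =>
      fixList_dir (G.fix r) rest a b
        ⟨h, fun e => hb (e ▸ List.mem_cons_self (a := r) (l := rest))⟩
        (fun m => hb (List.mem_cons_of_mem r m))

lemma fixList_bi (G : CADMG V) : ∀ (τ : List V) (a b : V),
    G.bi a b → a ∉ τ → b ∉ τ → (G.fixList τ).bi a b
  | [], _, _, h, _, _ => h
  | r :: rest, a, b, h, ha, hb =>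
      fixList_bi (G.fix r) rest a b
        ⟨h, fun e => ha (e ▸ List.mem_cons_self (a := r) (l := rest)),
          fun e => hb (e ▸ List.mem_cons_self (a := r) (l := rest))⟩
        (fun m => ha (List.mem_cons_of_mem r m))
        (fun m => hb (List.mem_cons_of_mem r m))

lemma valid_mem (G : CADMG V) : ∀ (σ : List V), G.Valid σ → ∀ r ∈ σ,
    ∃ τ : List V, (∀ v ∈ τ, v ∈ σ) ∧ r ∉ τ ∧ (G.fixList τ).Fixable r := by
  intro σ
  induction σ generalizing G with
  | nil => intro _ r hr; cases hr
  | cons s rest ih =>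
    intro hval r hr
    rcases List.mem_cons.mp hr with rfl | hr'
    · exact ⟨[], by simp, by simp, hval.1⟩
    · by_cases hrs : r = s
      · exact ⟨[], by simp, by simp, hrs ▸ hval.1⟩
      · obtain ⟨τ, hτ, hrτ, hfix⟩ := ih (G.fix s) hval.2 r hr'
        refine ⟨s :: τ, ?_, ?_, hfix⟩
        · intro v hv
          rcases List.mem_cons.mp hv with rfl | hv'
          · exact List.mem_cons_self
          · exact List.mem_cons_of_mem _ (hτ v hv')
        · intro h
          rcases List.mem_cons.mp h with rfl | h'
          · exact hrs rfl
          · exact hrτ h'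

end CADMG

/-- In `G0`, any reachable set containing `W` and `Y` must contain `A2`. -/
lemma A2_mem_of_reachable (G0 : CADMG Vtx) (hrnd : G0.rnd = Set.univ)
    (hdir : ∀ a b, G0.dir a b ↔ dir0 a b) (hbi : ∀ a b, G0.bi a b ↔ bi0 a b)
    (T : Set Vtx) (hT : G0.Reachable T) (hW : Vtx.W ∈ T) (hY : Vtx.Y ∈ T) :
    Vtx.A2 ∈ T := by
  by_contra hA2
  obtain ⟨σ, hval, hmem⟩ := hT
  have hA2σ : Vtx.A2 ∈ σ := (hmem Vtx.A2).mpr ⟨by rw [hrnd]; trivial, hA2⟩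
  have hWσ : Vtx.W ∉ σ := fun h => ((hmem Vtx.W).mp h).2 hW
  have hYσ : Vtx.Y ∉ σ := fun h => ((hmem Vtx.Y).mp h).2 hY
  obtain ⟨τ, hτσ, hA2τ, hfix⟩ := G0.valid_mem σ hval Vtx.A2 hA2σ
  have hWτ : Vtx.W ∉ τ := fun h => hWσ (hτσ _ h)
  have hYτ : Vtx.Y ∉ τ := fun h => hYσ (hτσ _ h)
  refine hfix.2 ⟨Vtx.Y, fun h => Vtx.noConfusion h, ?_, ?_⟩
  · exact Relation.ReflTransGen.single
      (G0.fixList_dir τ _ _ ((hdir _ _).mpr (Or.inr (Or.inr ⟨rfl, rfl⟩))) hYτ)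
  · exact Relation.ReflTransGen.trans
      (Relation.ReflTransGen.single
        (G0.fixList_bi τ _ _ ((hbi _ _).mpr (Or.inr (Or.inl ⟨rfl, rfl⟩))) hA2τ hWτ))
      (Relation.ReflTransGen.single
        (G0.fixList_bi τ _ _ ((hbi _ _).mpr (Or.inr (Or.inr (Or.inl ⟨rfl, rfl⟩)))) hWτ hYτ))

lemma bi_path_from_A1 (G0 : CADMG Vtx) (hbi : ∀ a b, G0.bi a b ↔ bi0 a b)
    (w : Vtx) (h : Relation.ReflTransGen G0.bi Vtx.A1 w) : w = Vtx.A1 := by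
  induction h with
  | refl => rfl
  | tail _ e ih =>
    subst ih
    rcases (hbi _ _).mp e with ⟨h1, _⟩ | ⟨h1, _⟩ | ⟨h1, _⟩ | ⟨h1, _⟩ <;> cases h1

/-- In `G0`, the set `{W, Y}` is not reachable and its reachable closure is
`{W, Y, A2}`; for `Y' = {Y}`, `A' = {A2}` we have `Y'* = {Y, A1, W}`, and the district
`{W, Y}` of `(G0)_{Y'*}` is not an intrinsic set of `G0`. -/
theorem G0_district_not_intrinsic
    (G0 : CADMG Vtx) (hrnd : G0.rnd = Set.univ)
    (hdir : ∀ a b, G0.dir a b ↔ dir0 a b) (hbi : ∀ a b, G0.bi a b ↔ bi0 a b) :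
    ¬ G0.Reachable {Vtx.W, Vtx.Y} ∧
    G0.IsReachableClosure {Vtx.W, Vtx.Y} {Vtx.W, Vtx.Y, Vtx.A2} ∧
    G0.Ystar {Vtx.A2} {Vtx.Y} = {Vtx.Y, Vtx.A1, Vtx.W} ∧
    (G0.induce (G0.Ystar {Vtx.A2} {Vtx.Y})).District {Vtx.W, Vtx.Y} ∧
    ¬ G0.Intrinsic {Vtx.W, Vtx.Y} := by
  -- the key facts
  have keyA2 := A2_mem_of_reachable G0 hrnd hdir hbi
  have part1 : ¬ G0.Reachable {Vtx.W, Vtx.Y} := by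
    intro h
    have := keyA2 _ h (by simp) (by simp)
    simp at this
  have hYst : G0.Ystar {Vtx.A2} {Vtx.Y} = {Vtx.Y, Vtx.A1, Vtx.W} := by
    ext v
    constructor
    · rintro ⟨y, hy, hpath⟩
      have hyY : y = Vtx.Y := by simpa using hy
      subst hyY
      cases v with
      | A1 => simp
      | W => simp
      | Y => simp
      | A2 =>
        rcases Relation.ReflTransGen.cases_head hpath with h | ⟨c, ⟨_, hA2, _⟩, _⟩
        · cases h
        · exact absurd (Set.mem_singleton _) hA2
    · intro hv
      simp only [Set.mem_insert_iff, Set.mem_singleton_iff] at hv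
      rcases hv with rfl | rfl | rfl
      · exact ⟨Vtx.Y, by simp, Relation.ReflTransGen.refl⟩
      · refine ⟨Vtx.Y, by simp, Relation.ReflTransGen.single ?_⟩
        exact ⟨(hdir _ _).mpr (Or.inr (Or.inl ⟨rfl, rfl⟩)), by simp, by simp⟩
      · refine ⟨Vtx.Y, by simp, Relation.ReflTransGen.head (b := Vtx.A1) ?_ (Relation.ReflTransGen.single ?_)⟩
        · exact ⟨(hdir _ _).mpr (Or.inl ⟨rfl, rfl⟩), by simp, by simp⟩
        · exact ⟨(hdir _ _).mpr (Or.inr (Or.inl ⟨rfl, rfl⟩)), by simp, by simp⟩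
  refine ⟨part1, ⟨?_, ?_, ?_⟩, hYst, ?_, ?_⟩
  · -- {W, Y, A2} is reachable via σ = [A1]
    refine ⟨[Vtx.A1], ⟨⟨by rw [hrnd]; trivial, ?_⟩, trivial⟩, ?_⟩
    · rintro ⟨w, hw, _, hb⟩
      exact hw (bi_path_from_A1 G0 hbi w hb)
    · intro v
      cases v <;> simp [hrnd]
  · intro v hv
    simp only [Set.mem_insert_iff, Set.mem_singleton_iff] at hv ⊢
    tauto
  · intro T hreach hsub v hv
    simp only [Set.mem_insert_iff, Set.mem_singleton_iff] at hv
    rcases hv with rfl | rfl | rfl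
    · exact hsub (by simp)
    · exact hsub (by simp)
    · exact keyA2 T hreach (hsub (by simp)) (hsub (by simp))
  · -- district
    refine ⟨Vtx.W, ⟨by rw [hrnd]; trivial, by rw [hYst]; simp⟩, ?_⟩
    ext w
    constructor
    · intro hw
      simp only [Set.mem_insert_iff, Set.mem_singleton_iff] at hw
      rcases hw with rfl | rfl
      · exact Relation.ReflTransGen.refl
      · refine Relation.ReflTransGen.single ?_
        exact ⟨(hbi _ _).mpr (Or.inr (Or.inr (Or.inl ⟨rfl, rfl⟩))),
          by rw [hYst]; simp, by rw [hYst]; simp⟩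
    · intro hw
      induction hw with
      | refl => simp
      | tail _ e ih =>
        obtain ⟨e1, _, hmem⟩ := e
        rcases (hbi _ _).mp e1 with ⟨_, rfl⟩ | ⟨_, rfl⟩ | ⟨_, rfl⟩ | ⟨_, rfl⟩
        · rw [hYst] at hmem; simp at hmem
        · simp
        · simp
        · simp
  · rintro ⟨hreach, _⟩
    exact part1 hreach
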